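/- If C is a comparator circuit with ℓ wires and s gates such that every gate of C is useful (i.e., not useless), then s ≤ ℓ·(ℓ−1)/2. -/

import Mathlib

/-- A comparator circuit on `n` Boolean variables with `ℓ` wires.
Each wire is labelled by a literal: a pair `(i, neg)` meaning the variable `x_i`
if `neg = false` and its negation `¬x_i` if `neg = true`.  Each gate is an ordered
pair of distinct wires `(w, w')`: applying it, `w` receives the conjunction of the
two held values and `w'` receives their disjunction.  A designated output wire
carries the result of the computation. -/
structure CompCircuit (n ℓ : ℕ) where
  label : Fin ℓ → Fin n × Bool
  gates : List (Fin ℓ × Fin ℓ)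
  distinct : ∀ g ∈ gates, g.1 ≠ g.2
  out : Fin ℓ

namespace CompCircuit

variable {n ℓ : ℕ}

/-- Value of the literal `(i, neg)` on input `x`. -/
def litVal (x : Fin n → Bool) (p : Fin n × Bool) : Bool :=
  if p.2 then !(x p.1) else x p.1

/-- Applying a comparator gate to the current wire values. -/
def applyGate (g : Fin ℓ × Fin ℓ) (v : Fin ℓ → Bool) : Fin ℓ → Bool :=
  fun w => if w = g.1 then v g.1 && v g.2 else if w = g.2 then v g.1 || v g.2 else v w

/-- Initial wire values on input `x`: each wire holds the value of its literal. -/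
def init (C : CompCircuit n ℓ) (x : Fin n → Bool) : Fin ℓ → Bool :=
  fun w => litVal x (C.label w)

/-- Wire values after all the gates have been applied in order. -/
def run (C : CompCircuit n ℓ) (x : Fin n → Bool) : Fin ℓ → Bool :=
  C.gates.foldl (fun v g => applyGate g v) (C.init x)

/-- The output of the circuit: the final value of the output wire. -/
def eval (C : CompCircuit n ℓ) (x : Fin n → Bool) : Bool :=
  C.run x C.out

/-- Wire values after the first `t` gates have been applied (i.e. just before gate `t`). -/
def stateAfter (C : CompCircuit n ℓ) (x : Fin n → Bool) (t : ℕ) : Fin ℓ → Bool :=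
  (C.gates.take t).foldl (fun v g => applyGate g v) (C.init x)

/-- The pair `(u_g(x), v_g(x))` of in-values of gate number `i` on input `x`. -/
def gateIn (C : CompCircuit n ℓ) (x : Fin n → Bool) (i : Fin C.gates.length) : Bool × Bool :=
  (C.stateAfter x i (C.gates.get i).1, C.stateAfter x i (C.gates.get i).2)

/-- Gate `i` is TYPE-1 useless: its in-values never form the pair `(1,0)`,
i.e. they always lie in `{(0,1),(0,0),(1,1)}`. -/
def Type1UselessAt (C : CompCircuit n ℓ) (i : Fin C.gates.length) : Prop :=
  ∀ x : Fin n → Bool, C.gateIn x i ≠ (true, false)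

/-- Gate `i` is TYPE-2 useless: its in-values never form the pair `(0,1)`,
i.e. they always lie in `{(1,0),(0,0),(1,1)}`. -/
def Type2UselessAt (C : CompCircuit n ℓ) (i : Fin C.gates.length) : Prop :=
  ∀ x : Fin n → Bool, C.gateIn x i ≠ (false, true)

/-- Gate `i` is useless if it is TYPE-1 or TYPE-2 useless. -/
def UselessAt (C : CompCircuit n ℓ) (i : Fin C.gates.length) : Prop :=
  C.Type1UselessAt i ∨ C.Type2UselessAt i

end CompCircuit

namespace UsefulAux

open CompCircuit Finset

variable {n ℓ : ℕ}

/-- Pointwise comparability (in one of the two directions) of two Boolean functions. -/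
def cmp (P Q : (Fin n → Bool) → Bool) : Prop :=
  (∀ x, P x ≤ Q x) ∨ (∀ x, Q x ≤ P x)

instance (P Q : (Fin n → Bool) → Bool) : Decidable (cmp P Q) := by
  unfold cmp; infer_instance

lemma cmp_symm {P Q : (Fin n → Bool) → Bool} (h : cmp P Q) : cmp Q P := h.symm

lemma cmp_congr {P P' Q Q' : (Fin n → Bool) → Bool} (hP : ∀ x, P x = P' x)
    (hQ : ∀ x, Q x = Q' x) : cmp P Q ↔ cmp P' Q' := by
  unfold cmp
  constructor <;> rintro (h | h)
  · exact Or.inl fun x => (hP x) ▸ (hQ x) ▸ h x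
  · exact Or.inr fun x => (hP x) ▸ (hQ x) ▸ h x
  · exact Or.inl fun x => (hP x).symm ▸ (hQ x).symm ▸ h x
  · exact Or.inr fun x => (hP x).symm ▸ (hQ x).symm ▸ h x

/-- Core fact 1: if (a,c) was comparable but (a∧b, c) is not, then (a∨b, c) is
comparable while (b,c) was not. -/
lemma core1 {A B Cc : (Fin n → Bool) → Bool}
    (h1 : ∃ x, A x = true ∧ B x = false) (h2 : ∃ x, A x = false ∧ B x = true)
    (hc : cmp A Cc) (hn : ¬ cmp (fun x => A x && B x) Cc) :
    cmp (fun x => A x || B x) Cc ∧ ¬ cmp B Cc := by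
  rcases hc with h | h
  · exact absurd (Or.inl fun x => le_trans (Bool.and_le_left _ _) (h x)) hn
  · refine ⟨Or.inr fun x => le_trans (h x) (Bool.left_le_or _ _), ?_⟩
    rintro (hb | hb)
    · obtain ⟨x, hA, hB⟩ := h2
      have := le_trans (hb x) (h x)
      rw [hA, hB] at this
      exact absurd this (by decide)
    · exact hn (Or.inr fun x => le_inf (h x) (hb x))

/-- Core fact 2: if (b,c) was comparable but (a∨b, c) is not, then (a∧b, c) is
comparable while (a,c) was not. -/
lemma core2 {A B Cc : (Fin n → Bool) → Bool}
    (h2 : ∃ x, A x = false ∧ B x = true)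
    (hc : cmp B Cc) (hn : ¬ cmp (fun x => A x || B x) Cc) :
    cmp (fun x => A x && B x) Cc ∧ ¬ cmp A Cc := by
  rcases hc with h | h
  case inr => exact absurd (Or.inr fun x => le_trans (h x) (Bool.right_le_or _ _)) hn
  refine ⟨Or.inl fun x => le_trans (Bool.and_le_right _ _) (h x), ?_⟩
  rintro (ha | ha)
  · exact hn (Or.inl fun x => sup_le (ha x) (h x))
  · obtain ⟨x, hA, hB⟩ := h2
    have := le_trans (h x) (ha x)
    rw [hA, hB] at this
    exact absurd this (by decide)

/-- Comparability of the values held by two wires just before gate `t`. -/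
def comp (C : CompCircuit n ℓ) (t : ℕ) (w w' : Fin ℓ) : Prop :=
  cmp (fun x => C.stateAfter x t w) (fun x => C.stateAfter x t w')

instance (C : CompCircuit n ℓ) (t : ℕ) (w w' : Fin ℓ) : Decidable (comp C t w w') := by
  unfold comp; infer_instance

/-- The set of comparable ordered pairs of distinct wires just before gate `t`. -/
def F (C : CompCircuit n ℓ) (t : ℕ) : Finset (Fin ℓ × Fin ℓ) :=
  Finset.univ.filter fun p => p.1 ≠ p.2 ∧ comp C t p.1 p.2

lemma mem_F {C : CompCircuit n ℓ} {t : ℕ} {p : Fin ℓ × Fin ℓ} :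
    p ∈ F C t ↔ p.1 ≠ p.2 ∧ comp C t p.1 p.2 := by
  simp [F]

lemma stateAfter_succ (C : CompCircuit n ℓ) (x : Fin n → Bool) (t : ℕ)
    (ht : t < C.gates.length) :
    C.stateAfter x (t + 1) = applyGate (C.gates.get ⟨t, ht⟩) (C.stateAfter x t) := by
  unfold stateAfter
  rw [List.take_succ, List.foldl_append]
  simp [List.getElem?_eq_getElem ht]

lemma card_F_le (C : CompCircuit n ℓ) (t : ℕ) : (F C t).card ≤ ℓ * (ℓ - 1) := by
  have hsub : F C t ⊆ (Finset.univ : Finset (Fin ℓ)).offDiag := by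
    intro p hp
    rw [mem_F] at hp
    rw [Finset.mem_offDiag]
    exact ⟨Finset.mem_univ _, Finset.mem_univ _, hp.1⟩
  calc (F C t).card ≤ _ := Finset.card_le_card hsub
    _ = ℓ * ℓ - ℓ := by rw [Finset.offDiag_card]; simp
    _ = ℓ * (ℓ - 1) := by rw [Nat.mul_sub ℓ ℓ 1, Nat.mul_one]



lemma step' (C : CompCircuit n ℓ) (t : ℕ) (a b : Fin ℓ) (hab : a ≠ b)
    (hSa : ∀ x, C.stateAfter x (t+1) a = (C.stateAfter x t a && C.stateAfter x t b))
    (hSb : ∀ x, C.stateAfter x (t+1) b = (C.stateAfter x t a || C.stateAfter x t b))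
    (hSo : ∀ c, c ≠ a → c ≠ b → ∀ x, C.stateAfter x (t+1) c = C.stateAfter x t c)
    (h1 : ∃ x, C.stateAfter x t a = true ∧ C.stateAfter x t b = false)
    (h2 : ∃ x, C.stateAfter x t a = false ∧ C.stateAfter x t b = true) :
    (F C t).card + 2 ≤ (F C (t+1)).card := by
  classical
  set σ : Equiv.Perm (Fin ℓ) := Equiv.swap a b with hσ
  -- the two wires of the gate are incomparable before the gate
  have hccAB : ¬ comp C t a b := by
    rintro (h | h)
    · obtain ⟨x, hA, hB⟩ := h1
      have := h x; simp only [hA, hB] at this; exact absurd this (by decide)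
    · obtain ⟨x, hA, hB⟩ := h2
      have := h x; simp only [hA, hB] at this; exact absurd this (by decide)
  have h1' : ∃ x, (fun x => C.stateAfter x t a) x = true ∧ (fun x => C.stateAfter x t b) x = false := h1
  have h2' : ∃ x, (fun x => C.stateAfter x t a) x = false ∧ (fun x => C.stateAfter x t b) x = true := h2
  -- the key exchange lemma
  have key : ∀ w w', w ≠ w' → comp C t w w' → ¬ comp C (t+1) w w' →
      comp C (t+1) (σ w) (σ w') ∧ ¬ comp C t (σ w) (σ w') := by
    intro w w' hne hc hn
    by_cases hwa : w = a
    · rw [hwa] at hne hc hn ⊢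
      by_cases hw'b : w' = b
      · rw [hw'b] at hc hn ⊢; exact absurd hc hccAB
      · have hw'a : w' ≠ a := Ne.symm hne
        have e1 : comp C (t+1) a w' ↔
            cmp (fun x => C.stateAfter x t a && C.stateAfter x t b)
              (fun x => C.stateAfter x t w') := cmp_congr hSa (hSo w' hw'a hw'b)
        obtain ⟨hor, hnb⟩ := core1 (A := fun x => C.stateAfter x t a)
          (B := fun x => C.stateAfter x t b) (Cc := fun x => C.stateAfter x t w')
          h1' h2' hc (fun hcon => hn (e1.mpr hcon))
        rw [hσ, Equiv.swap_apply_left, Equiv.swap_apply_of_ne_of_ne hw'a hw'b]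
        have e2 : comp C (t+1) b w' ↔
            cmp (fun x => C.stateAfter x t a || C.stateAfter x t b)
              (fun x => C.stateAfter x t w') := cmp_congr hSb (hSo w' hw'a hw'b)
        exact ⟨e2.mpr hor, hnb⟩
    · by_cases hwb : w = b
      · rw [hwb] at hne hc hn ⊢
        by_cases hw'a : w' = a
        · rw [hw'a] at hc hn ⊢; exact absurd (cmp_symm hc) hccAB
        · have hw'b : w' ≠ b := Ne.symm hne
          have e1 : comp C (t+1) b w' ↔
              cmp (fun x => C.stateAfter x t a || C.stateAfter x t b)
                (fun x => C.stateAfter x t w') := cmp_congr hSb (hSo w' hw'a hw'b)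
          obtain ⟨hor, hna⟩ := core2 (A := fun x => C.stateAfter x t a)
            (B := fun x => C.stateAfter x t b) (Cc := fun x => C.stateAfter x t w')
            h2' hc (fun hcon => hn (e1.mpr hcon))
          rw [hσ, Equiv.swap_apply_right, Equiv.swap_apply_of_ne_of_ne hw'a hw'b]
          have e2 : comp C (t+1) a w' ↔
              cmp (fun x => C.stateAfter x t a && C.stateAfter x t b)
                (fun x => C.stateAfter x t w') := cmp_congr hSa (hSo w' hw'a hw'b)
          exact ⟨e2.mpr hor, hna⟩
      · by_cases hw'a : w' = a
        · rw [hw'a] at hne hc hn ⊢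
          have e1 : comp C (t+1) w a ↔
              cmp (fun x => C.stateAfter x t w)
                (fun x => C.stateAfter x t a && C.stateAfter x t b) :=
            cmp_congr (hSo w hwa hwb) hSa
          obtain ⟨hor, hnb⟩ := core1 (A := fun x => C.stateAfter x t a)
            (B := fun x => C.stateAfter x t b) (Cc := fun x => C.stateAfter x t w)
            h1' h2' (cmp_symm hc) (fun hcon => hn (e1.mpr (cmp_symm hcon)))
          rw [hσ, Equiv.swap_apply_left, Equiv.swap_apply_of_ne_of_ne hwa hwb]
          have e2 : comp C (t+1) w b ↔
              cmp (fun x => C.stateAfter x t w)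
                (fun x => C.stateAfter x t a || C.stateAfter x t b) :=
            cmp_congr (hSo w hwa hwb) hSb
          exact ⟨e2.mpr (cmp_symm hor), fun hcon => hnb (cmp_symm hcon)⟩
        · by_cases hw'b : w' = b
          · rw [hw'b] at hne hc hn ⊢
            have e1 : comp C (t+1) w b ↔
                cmp (fun x => C.stateAfter x t w)
                  (fun x => C.stateAfter x t a || C.stateAfter x t b) :=
              cmp_congr (hSo w hwa hwb) hSb
            obtain ⟨hor, hna⟩ := core2 (A := fun x => C.stateAfter x t a)
              (B := fun x => C.stateAfter x t b) (Cc := fun x => C.stateAfter x t w)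
              h2' (cmp_symm hc) (fun hcon => hn (e1.mpr (cmp_symm hcon)))
            rw [hσ, Equiv.swap_apply_right, Equiv.swap_apply_of_ne_of_ne hwa hwb]
            have e2 : comp C (t+1) w a ↔
                cmp (fun x => C.stateAfter x t w)
                  (fun x => C.stateAfter x t a && C.stateAfter x t b) :=
              cmp_congr (hSo w hwa hwb) hSa
            exact ⟨e2.mpr (cmp_symm hor), fun hcon => hna (cmp_symm hcon)⟩
          · exfalso
            apply hn
            exact (cmp_congr (hSo w hwa hwb) (hSo w' hw'a hw'b)).mpr hc
  -- the injection
  set f : Fin ℓ × Fin ℓ → Fin ℓ × Fin ℓ :=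
    fun p => if comp C (t+1) p.1 p.2 then p else (σ p.1, σ p.2) with hf
  have hmem : ∀ p ∈ F C t, f p ∈ F C (t+1) := by
    intro p hp
    rw [mem_F] at hp
    by_cases hcn : comp C (t+1) p.1 p.2
    · rw [hf]; simp only [if_pos hcn]; exact mem_F.mpr ⟨hp.1, hcn⟩
    · rw [hf]; simp only [if_neg hcn]
      obtain ⟨hc1, _⟩ := key p.1 p.2 hp.1 hp.2 hcn
      exact mem_F.mpr ⟨fun he => hp.1 (σ.injective he), hc1⟩
  have hnotab : ∀ p ∈ F C t, f p ≠ (a, b) ∧ f p ≠ (b, a) := by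
    intro p hp
    rw [mem_F] at hp
    have hBA : ¬ comp C t b a := fun h => hccAB (cmp_symm h)
    by_cases hcn : comp C (t+1) p.1 p.2
    · rw [hf]; simp only [if_pos hcn]
      constructor
      · intro he; rw [he] at hp; exact hccAB hp.2
      · intro he; rw [he] at hp; exact hBA hp.2
    · rw [hf]; simp only [if_neg hcn]
      refine ⟨fun he => ?_, fun he => ?_⟩
      · have e1 : p.1 = b := by
          have h := congrArg (fun q => σ q.1) he
          simpa [hσ] using h
        have e2 : p.2 = a := by
          have h := congrArg (fun q => σ q.2) he
          simpa [hσ] using h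
        exact hBA (e1 ▸ e2 ▸ hp.2)
      · have e1 : p.1 = a := by
          have h := congrArg (fun q => σ q.1) he
          simpa [hσ] using h
        have e2 : p.2 = b := by
          have h := congrArg (fun q => σ q.2) he
          simpa [hσ] using h
        exact hccAB (e1 ▸ e2 ▸ hp.2)
  have hinj : Set.InjOn f (F C t) := by
    intro p hp q hq he
    simp only [Finset.mem_coe, mem_F] at hp hq
    by_cases h1p : comp C (t+1) p.1 p.2 <;> by_cases h1q : comp C (t+1) q.1 q.2
    · rw [hf] at he; simpa [if_pos h1p, if_pos h1q] using he
    · exfalso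
      rw [hf] at he; simp only [if_pos h1p, if_neg h1q] at he
      obtain ⟨_, h2q⟩ := key q.1 q.2 hq.1 hq.2 h1q
      apply h2q
      rw [← show p.1 = σ q.1 from congrArg Prod.fst he,
        ← show p.2 = σ q.2 from congrArg Prod.snd he]
      exact hp.2
    · exfalso
      rw [hf] at he; simp only [if_neg h1p, if_pos h1q] at he
      obtain ⟨_, h2p⟩ := key p.1 p.2 hp.1 hp.2 h1p
      apply h2p
      rw [show σ p.1 = q.1 from congrArg Prod.fst he,
        show σ p.2 = q.2 from congrArg Prod.snd he]
      exact hq.2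
    · rw [hf] at he; simp only [if_neg h1p, if_neg h1q] at he
      exact Prod.ext (σ.injective (congrArg Prod.fst he)) (σ.injective (congrArg Prod.snd he))
  -- (a,b) and (b,a) are comparable after the gate
  have hab' : comp C (t+1) a b := by
    left; intro x
    show C.stateAfter x (t+1) a ≤ C.stateAfter x (t+1) b
    rw [hSa x, hSb x]
    exact le_trans (Bool.and_le_left _ _) (Bool.left_le_or _ _)
  have hba' : comp C (t+1) b a := cmp_symm hab'
  -- counting
  set G := (F C t).image f with hG
  have hcardG : G.card = (F C t).card := Finset.card_image_of_injOn hinj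
  have hnotin1 : (b, a) ∉ G := by
    rw [hG, Finset.mem_image]
    rintro ⟨p, hp, hfp⟩
    exact (hnotab p hp).2 hfp
  have hnotin2 : (a, b) ∉ insert (b, a) G := by
    rw [Finset.mem_insert]
    rintro (he | he)
    · exact hab (by simpa using congrArg Prod.fst he)
    · rw [hG, Finset.mem_image] at he
      obtain ⟨p, hp, hfp⟩ := he
      exact (hnotab p hp).1 hfp
  have hsub : insert (a, b) (insert (b, a) G) ⊆ F C (t+1) := by
    intro p hp
    rw [Finset.mem_insert, Finset.mem_insert] at hp
    rcases hp with rfl | rfl | hp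
    · exact mem_F.mpr ⟨hab, hab'⟩
    · exact mem_F.mpr ⟨Ne.symm hab, hba'⟩
    · rw [hG, Finset.mem_image] at hp
      obtain ⟨q, hq, hfq⟩ := hp
      exact hfq ▸ hmem q hq
  calc (F C t).card + 2 = (insert (a, b) (insert (b, a) G)).card := by
        rw [Finset.card_insert_of_notMem hnotin2, Finset.card_insert_of_notMem hnotin1, hcardG]
    _ ≤ (F C (t+1)).card := Finset.card_le_card hsub

/-- Instantiated step lemma for a useful gate of the circuit. -/
lemma step (C : CompCircuit n ℓ) (i : Fin C.gates.length) (hU : ¬ C.UselessAt i) :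
    (F C (i : ℕ)).card + 2 ≤ (F C ((i : ℕ) + 1)).card := by
  have hab : (C.gates.get i).1 ≠ (C.gates.get i).2 :=
    C.distinct _ (List.get_mem C.gates i)
  have hstep : ∀ x, C.stateAfter x ((i : ℕ) + 1)
      = applyGate (C.gates.get i) (C.stateAfter x (i : ℕ)) := by
    intro x
    have := stateAfter_succ C x (i : ℕ) i.isLt
    simpa using this
  have hSa : ∀ x, C.stateAfter x ((i : ℕ)+1) (C.gates.get i).1 =
      (C.stateAfter x (i : ℕ) (C.gates.get i).1 && C.stateAfter x (i : ℕ) (C.gates.get i).2) := by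
    intro x; rw [hstep x]; simp [applyGate]
  have hSb : ∀ x, C.stateAfter x ((i : ℕ)+1) (C.gates.get i).2 =
      (C.stateAfter x (i : ℕ) (C.gates.get i).1 || C.stateAfter x (i : ℕ) (C.gates.get i).2) := by
    intro x; rw [hstep x]; simp only [applyGate]; rw [if_neg (Ne.symm hab)]; simp
  have hSo : ∀ c, c ≠ (C.gates.get i).1 → c ≠ (C.gates.get i).2 →
      ∀ x, C.stateAfter x ((i : ℕ)+1) c = C.stateAfter x (i : ℕ) c := by
    intro c hca hcb x; rw [hstep x]; simp only [applyGate]; rw [if_neg hca, if_neg hcb]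
  rw [UselessAt] at hU
  push_neg at hU
  obtain ⟨hT1, hT2⟩ := hU
  rw [Type1UselessAt] at hT1; push_neg at hT1
  rw [Type2UselessAt] at hT2; push_neg at hT2
  obtain ⟨x1, hx1⟩ := hT1
  obtain ⟨x2, hx2⟩ := hT2
  rw [gateIn, Prod.mk.injEq] at hx1 hx2
  exact step' C (i : ℕ) (C.gates.get i).1 (C.gates.get i).2 hab hSa hSb hSo ⟨x1, hx1⟩ ⟨x2, hx2⟩

end UsefulAux

/-- If every gate of a comparator circuit with `ℓ` wires and `s` gates is
useful (i.e. not useless), then `s ≤ ℓ·(ℓ−1)/2`. -/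
theorem useful_gates_le {n ℓ : ℕ} (C : CompCircuit n ℓ)
    (h : ∀ i : Fin C.gates.length, ¬ C.UselessAt i) :
    C.gates.length ≤ ℓ * (ℓ - 1) / 2 := by
  open UsefulAux in
  have grow : ∀ m, m ≤ C.gates.length → 2 * m ≤ (UsefulAux.F C m).card := by
    intro m
    induction m with
    | zero => intro _; simp
    | succ k ih =>
      intro hk
      have hk' : k < C.gates.length := Nat.lt_of_succ_le hk
      have hs := UsefulAux.step C ⟨k, hk'⟩ (h ⟨k, hk'⟩)
      have ihk := ih (Nat.le_of_lt hk')
      calc 2 * (k + 1) = 2 * k + 2 := by ring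
        _ ≤ (UsefulAux.F C k).card + 2 := by omega
        _ ≤ (UsefulAux.F C (k + 1)).card := hs
  have h1 := grow C.gates.length le_rfl
  have h2 := UsefulAux.card_F_le C C.gates.length
  omega
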